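/- Let G be a connected proper interval graph with a fixed compact proper interval representation on [0,P], and for a coloring col' of G and each index i with 0 ≤ i ≤ 2P let S_i(col') = { col'(v) : the interval of v contains the point i/2 }. For indices 0 ≤ ℓ ≤ r ≤ 2P, a color c ∈ C and a set S ⊆ C, let f(ℓ, r, c, S) be the minimum number t such that some sequence of t coloring operations applied to G yields a coloring col' satisfying (1) c ∈ S_i(col') for every i with ℓ ≤ i ≤ r, and (2) ∪_{ℓ ≤ i ≤ r} S_i(col') ⊆ S ∪ {c}. Then the minimum length of a solution of the free flooding game on G equals min over c ∈ C and S ⊆ C of f(0, 2P, c, S) + |S|. -/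
import Mathlib


open scoped Classical

/-- The set of vertices colored (and merged) by a coloring operation at `v`:
`v` together with all vertices in the same connected component as `v` in the
subgraph induced by the vertices of color `col v`. -/
def floodRegion {V C : Type*} (G : SimpleGraph V) (col : V → C) (v : V) : Set V :=
  {u | ∃ p : G.Walk v u, ∀ w ∈ p.support, col w = col v}

/-- The coloring operation `(v, c)`. -/
noncomputable def floodStep {V C : Type*} (G : SimpleGraph V) (col : V → C)
    (v : V) (c : C) : V → C :=
  fun u => if u ∈ floodRegion G col v then c else col u

/-- Applying a sequence of coloring operations. -/
noncomputable def floodSeq {V C : Type*} (G : SimpleGraph V) (col : V → C) :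
    List (V × C) → V → C
  | [] => col
  | op :: ops => floodSeq G (floodStep G col op.1 op.2) ops

/-- A sequence of coloring operations is a solution of the free flooding game if
applying it makes all vertices of `G` have the same color. -/
def IsFloodSolution {V C : Type*} (G : SimpleGraph V) (col : V → C)
    (ops : List (V × C)) : Prop :=
  ∃ c : C, ∀ u : V, floodSeq G col ops u = c

/-- `ptSet f i` is the set `N[i/2]` of vertices of the interval representation `f` (with
natural-number endpoints) whose interval `[(f v).1, (f v).2]` contains the half-integer
point `i/2`. -/
def ptSet {V : Type*} (f : V → ℕ × ℕ) (i : ℕ) : Set V :=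
  {v : V | 2 * (f v).1 ≤ i ∧ i ≤ 2 * (f v).2}

open SimpleGraph

section Aux

variable {V C : Type*}

lemma floodSeq_append (G : SimpleGraph V) (col : V → C) (l1 l2 : List (V × C)) :
    floodSeq G col (l1 ++ l2) = floodSeq G (floodSeq G col l1) l2 := by
  induction l1 generalizing col with
  | nil => rfl
  | cons a l ih => simpa [floodSeq] using ih (floodStep G col a.1 a.2)

lemma self_mem_floodRegion (G : SimpleGraph V) (col : V → C) (v : V) :
    v ∈ floodRegion G col v :=
  ⟨Walk.nil, by simp⟩

lemma flood_const (G : SimpleGraph V) (c0 : C) :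
    ∀ (l : List V) (d : V → C) (u : V), (u ∈ l ∨ d u = c0) →
      floodSeq G d (l.map fun w => (w, c0)) u = c0 := by
  intro l
  induction l with
  | nil =>
    intro d u hu
    rcases hu with h | h
    · simp at h
    · exact h
  | cons a l ih =>
    intro d u hu
    show floodSeq G (floodStep G d a c0) (l.map fun w => (w, c0)) u = c0
    apply ih
    rcases hu with h | h
    · rcases List.mem_cons.mp h with rfl | h'
      · right; unfold floodStep; rw [if_pos (self_mem_floodRegion G d u)]
      · left; exact h'
    · right; unfold floodStep; split <;> simp [h]

/-- Vertices whose intervals contain nearby points are equal or adjacent. -/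
lemma adj_of_pts (G : SimpleGraph V) (f : V → ℕ × ℕ)
    (hadj : ∀ u v : V, u ≠ v →
      (G.Adj u v ↔ max (f u).1 (f v).1 ≤ min (f u).2 (f v).2))
    {u v : V} {i j : ℕ} (hu : u ∈ ptSet f i) (hv : v ∈ ptSet f j)
    (h1 : i ≤ j) (h2 : j ≤ i + 1) : u = v ∨ G.Adj u v := by
  by_cases huv : u = v
  · exact Or.inl huv
  · refine Or.inr ?_
    rw [hadj u v huv]
    obtain ⟨hu1, hu2⟩ := hu
    obtain ⟨hv1, hv2⟩ := hv
    omega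

lemma mem_own_ptSet (f : V → ℕ × ℕ) (hle : ∀ v : V, (f v).1 ≤ (f v).2) (v : V) :
    v ∈ ptSet f (2 * (f v).1) :=
  ⟨le_rfl, by have := hle v; omega⟩

/-- If the color `c` is present at every point, the `c`-colored vertices are
connected by `c`-colored walks. -/
lemma c_connected (G : SimpleGraph V) (f : V → ℕ × ℕ) (P : ℕ)
    (hle : ∀ v : V, (f v).1 ≤ (f v).2) (hP : ∀ v : V, (f v).2 ≤ P)
    (hadj : ∀ u v : V, u ≠ v →
      (G.Adj u v ↔ max (f u).1 (f v).1 ≤ min (f u).2 (f v).2))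
    (d : V → C) (c : C)
    (hcov : ∀ i ≤ 2 * P, c ∈ d '' ptSet f i)
    {u w : V} (hu : d u = c) (hw : d w = c) :
    ∃ p : G.Walk u w, ∀ x ∈ p.support, d x = c := by
  have hg : ∀ i : ℕ, ∃ v : V, i ≤ 2 * P → v ∈ ptSet f i ∧ d v = c := by
    intro i
    by_cases hi : i ≤ 2 * P
    · obtain ⟨v, hv, hvc⟩ := hcov i hi
      exact ⟨v, fun _ => ⟨hv, hvc⟩⟩
    · exact ⟨u, fun h => absurd h hi⟩
  choose g hg using hg
  -- helpers
  have mkStep : ∀ (x y : V), d x = c → d y = c → (x = y ∨ G.Adj x y) →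
      ∃ q : G.Walk x y, ∀ z ∈ q.support, d z = c := by
    intro x y hx hy h
    rcases h with rfl | h
    · exact ⟨Walk.nil, by simpa using hx⟩
    · refine ⟨Walk.cons h Walk.nil, ?_⟩
      intro z hz
      simp only [Walk.support_cons, Walk.support_nil, List.mem_cons,
        List.mem_singleton] at hz
      rcases hz with rfl | rfl | h'
      · exact hx
      · exact hy
      · simp at h'
  have mkApp : ∀ {x y z : V} (p : G.Walk x y) (q : G.Walk y z),
      (∀ a ∈ p.support, d a = c) → (∀ a ∈ q.support, d a = c) →
      ∃ r : G.Walk x z, ∀ a ∈ r.support, d a = c := by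
    intro x y z p q hp hq
    refine ⟨p.append q, ?_⟩
    intro a ha
    rw [Walk.mem_support_append_iff] at ha
    rcases ha with ha | ha
    · exact hp a ha
    · exact hq a ha
  have mkRev : ∀ {x y : V} (p : G.Walk x y), (∀ a ∈ p.support, d a = c) →
      ∃ r : G.Walk y x, ∀ a ∈ r.support, d a = c := by
    intro x y p hp
    refine ⟨p.reverse, ?_⟩
    intro a ha
    rw [Walk.support_reverse, List.mem_reverse] at ha
    exact hp a ha
  -- the chain of representatives
  have chain : ∀ k i, i + k ≤ 2 * P →
      ∃ p : G.Walk (g i) (g (i + k)), ∀ x ∈ p.support, d x = c := by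
    intro k
    induction k with
    | zero =>
      intro i hi
      exact ⟨Walk.nil, by simpa using (hg i (by omega)).2⟩
    | succ k ih =>
      intro i hi
      obtain ⟨p, hp⟩ := ih i (by omega)
      have h1 := hg (i + k) (by omega)
      have h2 := hg (i + k + 1) (by omega)
      obtain ⟨q, hq⟩ := mkStep (g (i + k)) (g (i + k + 1)) h1.2 h2.2
        (adj_of_pts G f hadj h1.1 h2.1 (by omega) (by omega))
      obtain ⟨r, hr⟩ := mkApp p q hp hq
      exact ⟨r.copy rfl (by ring_nf), by
        intro x hx
        rw [Walk.support_copy] at hx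
        exact hr x hx⟩
  -- connect arbitrary `i ≤ j` representatives
  have chain' : ∀ i j, i ≤ j → j ≤ 2 * P →
      ∃ p : G.Walk (g i) (g j), ∀ x ∈ p.support, d x = c := by
    intro i j hij hj
    obtain ⟨p, hp⟩ := chain (j - i) i (by omega)
    refine ⟨p.copy rfl (by congr 1; omega), ?_⟩
    intro x hx
    rw [Walk.support_copy] at hx
    exact hp x hx
  have chain'' : ∀ i j, i ≤ 2 * P → j ≤ 2 * P →
      ∃ p : G.Walk (g i) (g j), ∀ x ∈ p.support, d x = c := by
    intro i j hi hj
    rcases le_total i j with h | h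
    · exact chain' i j h hj
    · obtain ⟨p, hp⟩ := chain' j i h hi
      exact mkRev p hp
  -- assemble
  set iu := 2 * (f u).1 with hiu
  set iw := 2 * (f w).1 with hiw
  have hiu2 : iu ≤ 2 * P := by have := hle u; have := hP u; omega
  have hiw2 : iw ≤ 2 * P := by have := hle w; have := hP w; omega
  obtain ⟨p1, hp1⟩ := mkStep u (g iu) hu (hg iu hiu2).2
    (adj_of_pts G f hadj (mem_own_ptSet f hle u) (hg iu hiu2).1 le_rfl (by omega))
  obtain ⟨p2, hp2⟩ := chain'' iu iw hiu2 hiw2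
  obtain ⟨p3', hp3'⟩ := mkStep w (g iw) hw (hg iw hiw2).2
    (adj_of_pts G f hadj (mem_own_ptSet f hle w) (hg iw hiw2).1 le_rfl (by omega))
  obtain ⟨p3, hp3⟩ := mkRev p3' hp3'
  obtain ⟨p4, hp4⟩ := mkApp p2 p3 hp2 hp3
  exact mkApp p1 p4 hp1 hp4

/-- Finishing lemma: given a coloring whose `c`-class covers every point and all
other colors lie in `T`, `T.card` further operations make the coloring constant. -/
lemma finish_flood (G : SimpleGraph V) (f : V → ℕ × ℕ) (P : ℕ)
    (hle : ∀ v : V, (f v).1 ≤ (f v).2) (hP : ∀ v : V, (f v).2 ≤ P)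
    (hadj : ∀ u v : V, u ≠ v →
      (G.Adj u v ↔ max (f u).1 (f v).1 ≤ min (f u).2 (f v).2))
    (hnonempty : ∀ i ≤ 2 * P, (ptSet f i).Nonempty) :
    ∀ (n : ℕ) (T : Finset C) (d : V → C) (c : C), T.card = n →
      (∀ i ≤ 2 * P, c ∈ d '' ptSet f i) →
      (∀ w : V, d w = c ∨ d w ∈ T) →
      ∃ extra : List (V × C), extra.length = n ∧
        ∃ c' : C, ∀ u : V, floodSeq G d extra u = c' := by
  intro n
  induction n with
  | zero =>
    intro T d c hT hcov hrange
    refine ⟨[], rfl, c, ?_⟩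
    intro u
    rcases hrange u with h | h
    · exact h
    · rw [Finset.card_eq_zero.mp hT] at h; simp at h
  | succ n ih =>
    intro T d c hT hcov hrange
    have hTne : T.Nonempty := Finset.card_pos.mp (by omega)
    obtain ⟨s, hs⟩ := hTne
    obtain ⟨v, hv, hvc⟩ := hcov 0 (by omega)
    set d' := floodStep G d v s with hd'
    have hreg : ∀ x : V, d x = c → x ∈ floodRegion G d v := by
      intro x hx
      obtain ⟨p, hp⟩ := c_connected G f P hle hP hadj d c hcov hvc hx
      exact ⟨p, fun w hw => by rw [hp w hw, hvc]⟩
    have hcov' : ∀ i ≤ 2 * P, s ∈ d' '' ptSet f i := by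
      intro i hi
      obtain ⟨x, hx, hxc⟩ := hcov i hi
      refine ⟨x, hx, ?_⟩
      show floodStep G d v s x = s
      unfold floodStep
      rw [if_pos (hreg x hxc)]
    have hrange' : ∀ w : V, d' w = s ∨ d' w ∈ T.erase s := by
      intro w
      show floodStep G d v s w = s ∨ floodStep G d v s w ∈ T.erase s
      unfold floodStep
      split
      · exact Or.inl rfl
      · rename_i hwreg
        rcases hrange w with h | h
        · exact absurd (hreg w h) hwreg
        · by_cases hws : d w = s
          · exact Or.inl hws
          · exact Or.inr (Finset.mem_erase.mpr ⟨hws, h⟩)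
    obtain ⟨extra, hlen, c', hc'⟩ := ih (T.erase s) d' s
      (by rw [Finset.card_erase_of_mem hs, hT]; omega) hcov' hrange'
    exact ⟨(v, s) :: extra, by simp [hlen], c', hc'⟩

end Aux

/-- Let `G` be a connected precolored proper interval graph with a fixed
compact proper interval representation `f` on `[0, P]` (integer endpoints, adjacency iff
intersection, no proper containment of intervals, `N[p] ≠ N[p+1]` for `0 ≤ p < P`, and
all point sets `N[i/2]`, `0 ≤ i ≤ 2P`, nonempty).  For a coloring `col'` let
`S_i(col') = col' '' N[i/2]` be the set of colors present at the point `i/2`, and for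
`c : C`, `S : Set C` let `f(0, 2P, c, S)` be the minimum number of coloring operations
producing a coloring `col'` with `c ∈ S_i(col')` and `S_i(col') ⊆ S ∪ {c}` for every
`0 ≤ i ≤ 2P`.  Then the minimum length of a solution of the free flooding game on `G`
equals `min_{c ∈ C, S ⊆ C} (f(0, 2P, c, S) + |S|)`. -/
theorem properInterval_flood_min_length_eq
    {V C : Type*} [Fintype V] [Fintype C]
    (G : SimpleGraph V) (hG : G.Connected) (col : V → C)
    (P : ℕ) (f : V → ℕ × ℕ)
    (hle : ∀ v : V, (f v).1 ≤ (f v).2)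
    (hP : ∀ v : V, (f v).2 ≤ P)
    (hadj : ∀ u v : V, u ≠ v →
      (G.Adj u v ↔ max (f u).1 (f v).1 ≤ min (f u).2 (f v).2))
    (hproper : ∀ u v : V, (f v).1 ≤ (f u).1 → (f u).2 ≤ (f v).2 →
      (f u).1 = (f v).1 ∧ (f u).2 = (f v).2)
    (hcompact : ∀ p : ℕ, p < P →
      {v : V | (f v).1 ≤ p ∧ p ≤ (f v).2} ≠ {v : V | (f v).1 ≤ p + 1 ∧ p + 1 ≤ (f v).2})
    (hnonempty : ∀ i ≤ 2 * P, (ptSet f i).Nonempty) :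
    sInf {t : ℕ | ∃ ops : List (V × C), ops.length = t ∧ IsFloodSolution G col ops} =
    sInf {n : ℕ | ∃ (c : C) (S : Set C),
      n = sInf {t : ℕ | ∃ ops : List (V × C), ops.length = t ∧
            (∀ i ≤ 2 * P, c ∈ floodSeq G col ops '' ptSet f i) ∧
            (∀ i ≤ 2 * P, floodSeq G col ops '' ptSet f i ⊆ insert c S)}
          + S.ncard} := by
  classical
  set A := {t : ℕ | ∃ ops : List (V × C), ops.length = t ∧ IsFloodSolution G col ops}
    with hA
  set F := fun (c : C) (S : Set C) =>
    {t : ℕ | ∃ ops : List (V × C), ops.length = t ∧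
      (∀ i ≤ 2 * P, c ∈ floodSeq G col ops '' ptSet f i) ∧
      (∀ i ≤ 2 * P, floodSeq G col ops '' ptSet f i ⊆ insert c S)} with hF
  set B := {n : ℕ | ∃ (c : C) (S : Set C), n = sInf (F c S) + S.ncard} with hB
  obtain ⟨v0, hv0⟩ := hnonempty 0 (by omega)
  -- a constant-coloring sequence exists for every target color
  have hsol : ∀ c0 : C, ∃ ops : List (V × C), ∀ u : V, floodSeq G col ops u = c0 := by
    intro c0
    refine ⟨Finset.univ.toList.map fun w => (w, c0), ?_⟩
    intro u
    exact flood_const G c0 _ col u (Or.inl (by simp [Finset.mem_toList]))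
  have hFne : ∀ (c : C) (S : Set C), (F c S).Nonempty := by
    intro c S
    obtain ⟨ops, hops⟩ := hsol c
    refine ⟨ops.length, ops, rfl, ?_, ?_⟩
    · intro i hi
      obtain ⟨x, hx⟩ := hnonempty i hi
      exact ⟨x, hx, hops x⟩
    · intro i hi y hy
      obtain ⟨x, hx, rfl⟩ := hy
      rw [hops x]
      exact Set.mem_insert c S
  have hAne : A.Nonempty := by
    obtain ⟨ops, hops⟩ := hsol (col v0)
    exact ⟨ops.length, ops, rfl, col v0, hops⟩
  apply le_antisymm
  · -- sInf A ≤ sInf B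
    have hBne : B.Nonempty := ⟨_, col v0, ∅, rfl⟩
    obtain ⟨c, S, hn⟩ := Nat.sInf_mem hBne
    obtain ⟨ops, hlen, hcov, hrange⟩ := Nat.sInf_mem (hFne c S)
    set d := floodSeq G col ops with hd
    have hSfin : S.Finite := Set.toFinite S
    have hrange' : ∀ w : V, d w = c ∨ d w ∈ hSfin.toFinset := by
      intro w
      have hi : 2 * (f w).1 ≤ 2 * P := by have := hle w; have := hP w; omega
      have := hrange (2 * (f w).1) hi ⟨w, mem_own_ptSet f hle w, rfl⟩
      rcases Set.mem_insert_iff.mp this with h | h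
      · exact Or.inl h
      · exact Or.inr (hSfin.mem_toFinset.mpr h)
    obtain ⟨extra, hexlen, c', hc'⟩ := finish_flood G f P hle hP hadj hnonempty
      hSfin.toFinset.card hSfin.toFinset d c rfl hcov hrange'
    have hsolu : IsFloodSolution G col (ops ++ extra) := by
      refine ⟨c', fun u => ?_⟩
      rw [floodSeq_append]
      exact hc' u
    have hmem : (ops ++ extra).length ∈ A := ⟨ops ++ extra, rfl, hsolu⟩
    calc sInf A ≤ (ops ++ extra).length := Nat.sInf_le hmem
      _ = sInf (F c S) + S.ncard := by
          rw [List.length_append, hlen, hexlen, Set.ncard_eq_toFinset_card S hSfin]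
      _ = sInf B := hn.symm
  · -- sInf B ≤ sInf A
    obtain ⟨ops, hlen, c, hc⟩ := Nat.sInf_mem hAne
    have hmemF : ops.length ∈ F c ∅ := by
      refine ⟨ops, rfl, ?_, ?_⟩
      · intro i hi
        obtain ⟨x, hx⟩ := hnonempty i hi
        exact ⟨x, hx, hc x⟩
      · intro i hi y hy
        obtain ⟨x, hx, rfl⟩ := hy
        rw [hc x]
        exact Set.mem_insert c ∅
    calc sInf B ≤ sInf (F c ∅) + (∅ : Set C).ncard := Nat.sInf_le ⟨c, ∅, rfl⟩
      _ = sInf (F c ∅) := by simp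
      _ ≤ ops.length := Nat.sInf_le hmemF
      _ = sInf A := hlen
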